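/- Let f : (0,∞) → ℝ be locally of bounded variation on (0,∞) and satisfy the general monotonicity inequality with constants C > 1 and λ = 2^ν (that is, for every x > 0 the total variation of f over [x, 2x] is at most C·∫_{x/λ}^{λx} |f(t)|/t dt), and let μ ∈ ℝ. Then the function g(t) = t^μ f(t) is locally of bounded variation on (0,∞) and there exist constants C' > 1 and λ' > 1 such that for every x > 0 the total variation of g over [x, 2x] is at most C'·∫_{x/λ'}^{λ'x} |g(t)|/t dt. -/

import Mathlib

open MeasureTheory Filter Set

lemma my_eVariationOn_neg (f : ℝ → ℝ) (s : Set ℝ) :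
    eVariationOn (fun x => -(f x)) s = eVariationOn f s := by
  simp only [eVariationOn, edist_neg_neg]

lemma my_antitoneOn_eVariationOn_le {f : ℝ → ℝ} {s : Set ℝ} (hf : AntitoneOn f s) {a b : ℝ}
    (as : a ∈ s) (bs : b ∈ s) : eVariationOn f (s ∩ Icc a b) ≤ ENNReal.ofReal (f a - f b) := by
  have hm : MonotoneOn (fun x => -(f x)) s := fun u hu v hv huv => neg_le_neg (hf hu hv huv)
  have h := hm.eVariationOn_le as bs
  rw [my_eVariationOn_neg] at h
  rw [show f a - f b = -(f b) - -(f a) by ring]; exact h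

lemma my_eVariationOn_mul_le (u v : ℝ → ℝ) (s : Set ℝ) (Mu Mv : ℝ)
    (hMu : 0 ≤ Mu) (hMv : 0 ≤ Mv)
    (hu : ∀ t ∈ s, |u t| ≤ Mu) (hv : ∀ t ∈ s, |v t| ≤ Mv) :
    eVariationOn (fun t => u t * v t) s ≤
      ENNReal.ofReal Mu * eVariationOn v s + ENNReal.ofReal Mv * eVariationOn u s := by
  apply iSup_le
  rintro ⟨n, w, hw, ws⟩
  calc ∑ i ∈ Finset.range n, edist (u (w (i+1)) * v (w (i+1))) (u (w i) * v (w i))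
      ≤ ∑ i ∈ Finset.range n, (ENNReal.ofReal Mu * edist (v (w (i+1))) (v (w i))
          + ENNReal.ofReal Mv * edist (u (w (i+1))) (u (w i))) := by
        apply Finset.sum_le_sum; intro i _
        rw [edist_dist, Real.dist_eq, edist_dist, Real.dist_eq, edist_dist, Real.dist_eq,
          ← ENNReal.ofReal_mul hMu, ← ENNReal.ofReal_mul hMv,
          ← ENNReal.ofReal_add (by positivity) (by positivity)]
        apply ENNReal.ofReal_le_ofReal
        have key : u (w (i+1)) * v (w (i+1)) - u (w i) * v (w i)
            = u (w (i+1)) * (v (w (i+1)) - v (w i)) + (u (w (i+1)) - u (w i)) * v (w i) := by ring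
        calc |u (w (i+1)) * v (w (i+1)) - u (w i) * v (w i)|
            ≤ |u (w (i+1))| * |v (w (i+1)) - v (w i)| + |u (w (i+1)) - u (w i)| * |v (w i)| := by
              rw [key]; exact (abs_add_le _ _).trans (by rw [abs_mul, abs_mul])
          _ ≤ Mu * |v (w (i+1)) - v (w i)| + Mv * |u (w (i+1)) - u (w i)| := by
              have h1 := hu _ (ws (i+1)); have h2 := hv _ (ws i)
              have h3 := abs_nonneg (v (w (i+1)) - v (w i))
              have h4 := abs_nonneg (u (w (i+1)) - u (w i))
              nlinarith [abs_nonneg (u (w (i+1))), abs_nonneg (v (w i))]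
      _ = ENNReal.ofReal Mu * ∑ i ∈ Finset.range n, edist (v (w (i+1))) (v (w i))
          + ENNReal.ofReal Mv * ∑ i ∈ Finset.range n, edist (u (w (i+1))) (u (w i)) := by
        rw [Finset.sum_add_distrib, ← Finset.mul_sum, ← Finset.mul_sum]
      _ ≤ _ := add_le_add (mul_le_mul_right (eVariationOn.sum_le (f := v) (n := n) hw ws) _)
          (mul_le_mul_right (eVariationOn.sum_le (f := u) (n := n) hw ws) _)

lemma my_rpow_le_of_mem {a b t μ : ℝ} (ha : 0 < a) (h1 : a ≤ t) (h2 : t ≤ b) :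
    t ^ μ ≤ a ^ μ + b ^ μ := by
  have ht : 0 < t := lt_of_lt_of_le ha h1
  have hb : 0 < b := lt_of_lt_of_le ht h2
  have hap : 0 < a ^ μ := Real.rpow_pos_of_pos ha μ
  have hbp : 0 < b ^ μ := Real.rpow_pos_of_pos hb μ
  rcases le_total 0 μ with hμ | hμ
  · have h3 : t ^ μ ≤ b ^ μ := Real.rpow_le_rpow ht.le h2 hμ
    linarith
  · have h3 : t ^ μ ≤ a ^ μ := Real.rpow_le_rpow_of_nonpos ha h1 hμ
    linarith

lemma my_le_rpow_of_mem {a b t μ : ℝ} (ha : 0 < a) (h1 : a ≤ t) (h2 : t ≤ b) :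
    min (a ^ μ) (b ^ μ) ≤ t ^ μ := by
  rcases le_total 0 μ with hμ | hμ
  · exact (min_le_left _ _).trans (Real.rpow_le_rpow ha.le h1 hμ)
  · exact (min_le_right _ _).trans (Real.rpow_le_rpow_of_nonpos (ha.trans_le h1) h2 hμ)

lemma my_eVar_rpow_le {a b μ : ℝ} (ha : 0 < a) (hab : a ≤ b) :
    eVariationOn (fun t : ℝ => t ^ μ) (Icc a b) ≤ ENNReal.ofReal (a ^ μ + b ^ μ) := by
  have hb : 0 < b := lt_of_lt_of_le ha hab
  have hap : 0 < a ^ μ := Real.rpow_pos_of_pos ha μ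
  have hbp : 0 < b ^ μ := Real.rpow_pos_of_pos hb μ
  rcases le_total 0 μ with hμ | hμ
  · have hm : MonotoneOn (fun t : ℝ => t ^ μ) (Icc a b) := fun s hs t _ hst =>
      Real.rpow_le_rpow (le_of_lt (ha.trans_le hs.1)) hst hμ
    have h := hm.eVariationOn_le (left_mem_Icc.2 hab) (right_mem_Icc.2 hab)
    rw [inter_self] at h
    exact h.trans (ENNReal.ofReal_le_ofReal (by linarith))
  · have hm : AntitoneOn (fun t : ℝ => t ^ μ) (Icc a b) := fun s hs t ht hst =>
      Real.rpow_le_rpow_of_nonpos (ha.trans_le hs.1) hst hμ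
    have h := my_antitoneOn_eVariationOn_le hm (left_mem_Icc.2 hab) (right_mem_Icc.2 hab)
    rw [inter_self] at h
    exact h.trans (ENNReal.ofReal_le_ofReal (by linarith))

set_option maxHeartbeats 1000000 in
/-- If `f` is locally of bounded variation on `(0,∞)` and satisfies the general monotonicity
inequality with constants `C > 1` and `λ = 2^ν`, then for any `μ ∈ ℝ` the function
`g(t) = t^μ f(t)` is locally of bounded variation on `(0,∞)` and satisfies the general
monotonicity inequality with some constants `C' > 1` and `λ' > 1`. -/
theorem GM_inequality_of_rpow_smul (f : ℝ → ℝ) (C : ℝ) (hC : 1 < C) (ν : ℕ) (hν : 1 ≤ ν)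
    (hBV : LocallyBoundedVariationOn f (Set.Ioi 0))
    (hGMineq : ∀ x > (0:ℝ), eVariationOn f (Set.Icc x (2*x)) ≤
      ENNReal.ofReal (C * ∫ t in Set.Ioo (x/(2^ν)) ((2^ν)*x), |f t| / t))
    (μ : ℝ) :
    LocallyBoundedVariationOn (fun t : ℝ => t ^ μ * f t) (Set.Ioi 0) ∧
    ∃ C' : ℝ, 1 < C' ∧ ∃ l' : ℝ, 1 < l' ∧
      ∀ x > (0:ℝ), eVariationOn (fun t : ℝ => t ^ μ * f t) (Set.Icc x (2*x)) ≤
        ENNReal.ofReal (C' * ∫ t in Set.Ioo (x/l') (l'*x), |t ^ μ * f t| / t) := by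
  set L : ℝ := 2 ^ ν with hLdef
  have hL2 : (2:ℝ) ≤ L := by
    calc (2:ℝ) = 2 ^ 1 := (pow_one 2).symm
    _ ≤ 2 ^ ν := pow_le_pow_right₀ one_le_two hν
  have hL1 : (1:ℝ) < L := lt_of_lt_of_le one_lt_two hL2
  have hL0 : (0:ℝ) < L := by linarith
  obtain ⟨p, q, hpmon, hqmon, hpq⟩ := hBV.exists_monotoneOn_sub_monotoneOn
  have hfae : AEMeasurable f (volume.restrict (Ioi (0:ℝ))) := by
    have hp' := aemeasurable_restrict_of_monotoneOn (μ := volume) measurableSet_Ioi hpmon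
    have hq' := aemeasurable_restrict_of_monotoneOn (μ := volume) measurableSet_Ioi hqmon
    rw [hpq]; exact hp'.sub hq'
  have hPmeas : Measurable (fun t : ℝ => t ^ μ) := measurable_id.pow measurable_const
  have hIcc_sub : ∀ a : ℝ, 0 < a → ∀ b : ℝ, Ioi (0:ℝ) ∩ Icc a b = Icc a b := fun a ha b =>
    inter_eq_self_of_subset_right (fun t ht => lt_of_lt_of_le ha ht.1)
  -- Part 1
  have part1 : LocallyBoundedVariationOn (fun t : ℝ => t ^ μ * f t) (Set.Ioi 0) := by
    intro a b ha hb
    rw [mem_Ioi] at ha hb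
    show eVariationOn _ _ ≠ ⊤
    rw [hIcc_sub a ha b]
    rcases le_or_gt a b with hab | hab
    · have hBVab : BoundedVariationOn f (Icc a b) := by
        have h := hBV a b (mem_Ioi.2 ha) (mem_Ioi.2 hb)
        rwa [hIcc_sub a ha b] at h
      have haIcc : a ∈ Icc a b := left_mem_Icc.2 hab
      have hfb : ∀ t ∈ Icc a b, |f t| ≤ |f a| + (eVariationOn f (Icc a b)).toReal := by
        intro t ht
        have h := hBVab.dist_le ht haIcc
        rw [Real.dist_eq] at h
        have h2 := abs_sub_abs_le_abs_sub (f t) (f a)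
        linarith
      have hPb : ∀ t ∈ Icc a b, |(fun t : ℝ => t ^ μ) t| ≤ a ^ μ + b ^ μ := by
        intro t ht
        rw [abs_of_pos (Real.rpow_pos_of_pos (lt_of_lt_of_le ha ht.1) μ)]
        exact my_rpow_le_of_mem ha ht.1 ht.2
      have hMu0 : (0:ℝ) ≤ a ^ μ + b ^ μ :=
        add_nonneg (Real.rpow_nonneg ha.le μ) (Real.rpow_nonneg (by linarith) μ)
      have hMv0 : (0:ℝ) ≤ |f a| + (eVariationOn f (Icc a b)).toReal :=
        add_nonneg (abs_nonneg _) ENNReal.toReal_nonneg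
      have key := my_eVariationOn_mul_le (fun t : ℝ => t ^ μ) f (Icc a b) _ _ hMu0 hMv0 hPb hfb
      refine ne_top_of_le_ne_top ?_ key
      refine ENNReal.add_ne_top.2 ⟨ENNReal.mul_ne_top ENNReal.ofReal_ne_top hBVab,
        ENNReal.mul_ne_top ENNReal.ofReal_ne_top
          (ne_top_of_le_ne_top ENNReal.ofReal_ne_top (my_eVar_rpow_le ha hab))⟩
    · rw [Icc_eq_empty hab.not_ge]
      rw [eVariationOn.subsingleton _ subsingleton_empty]
      exact ENNReal.zero_ne_top
  refine ⟨part1, ?_⟩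
  -- constants
  have hLμ : 0 < L ^ μ := Real.rpow_pos_of_pos hL0 μ
  set m0 : ℝ := min ((L ^ μ)⁻¹) (L ^ μ) with hm0def
  have hm0 : 0 < m0 := lt_min (inv_pos.2 hLμ) hLμ
  have hlog2 : 0 < Real.log 2 := Real.log_pos one_lt_two
  have h2μ : 0 < (2:ℝ) ^ μ := Real.rpow_pos_of_pos two_pos μ
  set K : ℝ := (1 + (2:ℝ) ^ μ) * (3 * C + 1 / Real.log 2) with hKdef
  have hK : 0 < K := mul_pos (by linarith) (by positivity)
  refine ⟨max (K / m0) 2, lt_of_lt_of_le one_lt_two (le_max_right _ _), L, hL1, ?_⟩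
  intro x hx
  have hGM := hGMineq x hx
  have hxL : 0 < x / L := div_pos hx hL0
  have hxLx : x / L ≤ x := by rw [div_le_iff₀ hL0]; nlinarith
  have hxLx2 : 2 * x ≤ L * x := by nlinarith
  have hxmem : x ∈ Icc (x/L) (L*x) := ⟨hxLx, by nlinarith⟩
  have hIoo_sub : Ioo (x/L) (L*x) ⊆ Ioi (0:ℝ) := fun t ht => lt_trans hxL ht.1
  have hBVb : BoundedVariationOn f (Icc (x/L) (L*x)) := by
    have h := hBV (x/L) (L*x) (mem_Ioi.2 hxL) (mem_Ioi.2 (by positivity))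
    rwa [hIcc_sub _ hxL] at h
  have hfbd : ∀ t ∈ Icc (x/L) (L*x), |f t| ≤ |f x| + (eVariationOn f (Icc (x/L) (L*x))).toReal := by
    intro t ht
    have h := hBVb.dist_le ht hxmem
    rw [Real.dist_eq] at h
    have h2 := abs_sub_abs_le_abs_sub (f t) (f x)
    linarith
  set VB : ℝ := (eVariationOn f (Icc (x/L) (L*x))).toReal with hVBdef
  have hfmeas : AEMeasurable f (volume.restrict (Ioo (x/L) (L*x))) :=
    hfae.mono_measure (Measure.restrict_mono hIoo_sub le_rfl)
  have hMfB0 : (0:ℝ) ≤ |f x| + VB := add_nonneg (abs_nonneg _) ENNReal.toReal_nonneg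
  have hasm1 : AEStronglyMeasurable (fun t => |f t| / t) (volume.restrict (Ioo (x/L) (L*x))) := by
    have h1 : AEStronglyMeasurable (fun t => ‖f t‖ / t) (volume.restrict (Ioo (x/L) (L*x))) :=
      ((hfmeas.norm.div aemeasurable_id).aestronglyMeasurable)
    simpa only [Real.norm_eq_abs] using h1
  have hasm2 : AEStronglyMeasurable (fun t => |t ^ μ * f t| / t)
      (volume.restrict (Ioo (x/L) (L*x))) := by
    have h1 : AEStronglyMeasurable (fun t => ‖t ^ μ * f t‖ / t)
        (volume.restrict (Ioo (x/L) (L*x))) :=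
      (((hPmeas.aemeasurable.mul hfmeas).norm.div aemeasurable_id).aestronglyMeasurable)
    simpa only [Real.norm_eq_abs] using h1
  have hintf : IntegrableOn (fun t => |f t| / t) (Ioo (x/L) (L*x)) := by
    refine Integrable.mono' (g := fun _ => (|f x| + VB) / (x / L))
      (integrableOn_const measure_Ioo_lt_top.ne) hasm1 ?_
    refine ae_restrict_of_forall_mem measurableSet_Ioo ?_
    intro t ht
    have ht0 : 0 < t := lt_trans hxL ht.1
    rw [Real.norm_eq_abs, abs_of_nonneg (div_nonneg (abs_nonneg _) ht0.le)]
    exact div_le_div₀ hMfB0 (hfbd t (Ioo_subset_Icc_self ht)) hxL ht.1.le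
  have hP1 : (0:ℝ) ≤ (x/L) ^ μ + (L*x) ^ μ :=
    add_nonneg (Real.rpow_nonneg hxL.le μ) (Real.rpow_nonneg (by positivity) μ)
  have hintg : IntegrableOn (fun t => |t ^ μ * f t| / t) (Ioo (x/L) (L*x)) := by
    refine Integrable.mono' (g := fun _ => ((x/L) ^ μ + (L*x) ^ μ) * (|f x| + VB) / (x / L))
      (integrableOn_const measure_Ioo_lt_top.ne) hasm2 ?_
    refine ae_restrict_of_forall_mem measurableSet_Ioo ?_
    intro t ht
    have ht0 : 0 < t := lt_trans hxL ht.1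
    rw [Real.norm_eq_abs, abs_of_nonneg (div_nonneg (abs_nonneg _) ht0.le)]
    refine div_le_div₀ (mul_nonneg hP1 hMfB0) ?_ hxL ht.1.le
    rw [abs_mul]
    have h1 : |t ^ μ| ≤ (x/L) ^ μ + (L*x) ^ μ := by
      rw [abs_of_pos (Real.rpow_pos_of_pos ht0 μ)]
      exact my_rpow_le_of_mem hxL ht.1.le ht.2.le
    exact mul_le_mul h1 (hfbd t (Ioo_subset_Icc_self ht)) (abs_nonneg _) hP1
  have hint2 : IntegrableOn (fun t => |f t| / t) (Ioo x (2*x)) :=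
    hintf.mono_set (Ioo_subset_Ioo hxLx hxLx2)
  have hcont_inv : IntegrableOn (fun t : ℝ => t⁻¹) (Ioo x (2*x)) := by
    have h : ContinuousOn (fun t : ℝ => t⁻¹) (Icc x (2*x)) :=
      continuousOn_inv₀.mono (fun t ht => ne_of_gt (lt_of_lt_of_le hx ht.1))
    exact (h.integrableOn_compact isCompact_Icc).mono_set Ioo_subset_Icc_self
  have hEinv : ∫ t in Ioo x (2*x), t⁻¹ = Real.log 2 := by
    rw [← integral_Ioc_eq_integral_Ioo, ← intervalIntegral.integral_of_le (by linarith)]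
    rw [integral_inv_of_pos hx (by linarith)]
    rw [mul_div_assoc, div_self hx.ne', mul_one]
  have hI0 : (0:ℝ) ≤ ∫ t in Ioo (x/L) (L*x), |f t| / t :=
    setIntegral_nonneg measurableSet_Ioo
      (fun t ht => div_nonneg (abs_nonneg _) (le_of_lt (lt_trans hxL ht.1)))
  set I : ℝ := ∫ t in Ioo (x/L) (L*x), |f t| / t with hIdef
  set J : ℝ := ∫ t in Ioo (x/L) (L*x), |t ^ μ * f t| / t with hJdef
  have hJ0 : (0:ℝ) ≤ J := by
    rw [hJdef]
    exact setIntegral_nonneg measurableSet_Ioo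
      (fun t ht => div_nonneg (abs_nonneg _) (le_of_lt (lt_trans hxL ht.1)))
  have hBV0 : BoundedVariationOn f (Icc x (2*x)) := hBVb.mono (Icc_subset_Icc hxLx hxLx2)
  set V : ℝ := (eVariationOn f (Icc x (2*x))).toReal with hVdef
  have hV0 : (0:ℝ) ≤ V := ENNReal.toReal_nonneg
  have hVle : V ≤ C * I :=
    ENNReal.toReal_le_of_le_ofReal (mul_nonneg (by linarith) hI0) hGM
  have hII : ∫ t in Ioo x (2*x), |f t| / t ≤ I := by
    rw [hIdef]
    refine setIntegral_mono_set hintf ?_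
      (HasSubset.Subset.eventuallyLE (Ioo_subset_Ioo hxLx hxLx2))
    exact ae_restrict_of_forall_mem measurableSet_Ioo
      (fun t ht => div_nonneg (abs_nonneg _) (le_of_lt (lt_trans hxL ht.1)))
  have hsup_f : ∀ t ∈ Icc x (2*x), |f t| ≤ |f x| + V := by
    intro t ht
    have h := hBV0.dist_le ht (left_mem_Icc.2 (by linarith))
    rw [Real.dist_eq] at h
    have h2 := abs_sub_abs_le_abs_sub (f t) (f x)
    rw [← hVdef] at h
    linarith
  have hfx : |f x| * Real.log 2 ≤ (∫ t in Ioo x (2*x), |f t| / t) + V * Real.log 2 := by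
    have hint3 : IntegrableOn (fun t => |f t| / t + V * t⁻¹) (Ioo x (2*x)) :=
      hint2.add (hcont_inv.const_mul V)
    have step1 : ∫ t in Ioo x (2*x), |f x| * t⁻¹ ≤
        ∫ t in Ioo x (2*x), (|f t| / t + V * t⁻¹) := by
      refine setIntegral_mono_on (hcont_inv.const_mul (|f x|)) hint3 measurableSet_Ioo ?_
      intro t ht
      have ht0 : 0 < t := lt_trans hx ht.1
      have h1 : |f x| ≤ |f t| + V := by
        have h := hBV0.dist_le (left_mem_Icc.2 (by linarith)) (Ioo_subset_Icc_self ht)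
        rw [Real.dist_eq] at h
        rw [← hVdef] at h
        have h2 := abs_sub_abs_le_abs_sub (f x) (f t)
        linarith
      calc |f x| * t⁻¹ ≤ (|f t| + V) * t⁻¹ :=
            mul_le_mul_of_nonneg_right h1 (inv_nonneg.2 ht0.le)
        _ = |f t| / t + V * t⁻¹ := by rw [add_mul, div_eq_mul_inv]
    calc |f x| * Real.log 2 = ∫ t in Ioo x (2*x), |f x| * t⁻¹ := by
          rw [integral_const_mul, hEinv]
      _ ≤ ∫ t in Ioo x (2*x), (|f t| / t + V * t⁻¹) := step1
      _ = (∫ t in Ioo x (2*x), |f t| / t) + ∫ t in Ioo x (2*x), V * t⁻¹ :=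
          integral_add hint2 (hcont_inv.const_mul V)
      _ = (∫ t in Ioo x (2*x), |f t| / t) + V * Real.log 2 := by
          rw [integral_const_mul, hEinv]
  have hfx2 : |f x| ≤ I / Real.log 2 + V := by
    have hfxI : |f x| * Real.log 2 ≤ I + V * Real.log 2 := le_trans hfx (by linarith)
    have h' : |f x| ≤ (I + V * Real.log 2) / Real.log 2 := (le_div_iff₀ hlog2).2 hfxI
    rwa [add_div, mul_div_cancel_right₀ _ hlog2.ne'] at h'
  have hpt : ∀ t ∈ Ioo (x/L) (L*x), m0 * x ^ μ * (|f t| / t) ≤ |t ^ μ * f t| / t := by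
    intro t ht
    have ht0 : 0 < t := lt_trans hxL ht.1
    have h1 : m0 * x ^ μ ≤ t ^ μ := by
      have h2 : min ((x/L) ^ μ) ((L*x) ^ μ) ≤ t ^ μ := my_le_rpow_of_mem hxL ht.1.le ht.2.le
      refine le_trans (le_min ?_ ?_) h2
      · have he : (x/L) ^ μ = x ^ μ * (L ^ μ)⁻¹ := by
          rw [Real.div_rpow hx.le hL0.le, div_eq_mul_inv]
        rw [he, mul_comm m0]
        exact mul_le_mul_of_nonneg_left (min_le_left _ _) (Real.rpow_nonneg hx.le μ)
      · have he : (L*x) ^ μ = x ^ μ * L ^ μ := by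
          rw [Real.mul_rpow hL0.le hx.le, mul_comm]
        rw [he, mul_comm m0]
        exact mul_le_mul_of_nonneg_left (min_le_right _ _) (Real.rpow_nonneg hx.le μ)
    calc m0 * x ^ μ * (|f t| / t) ≤ t ^ μ * (|f t| / t) :=
          mul_le_mul_of_nonneg_right h1 (div_nonneg (abs_nonneg _) ht0.le)
      _ = |t ^ μ * f t| / t := by
          rw [abs_mul, abs_of_pos (Real.rpow_pos_of_pos ht0 μ), mul_div_assoc]
  have hcJ : m0 * x ^ μ * I ≤ J := by
    have h := setIntegral_mono_on (hintf.const_mul (m0 * x ^ μ)) hintg measurableSet_Ioo hpt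
    rw [hIdef, hJdef]
    rwa [integral_const_mul] at h
  -- final assembly
  have hxμ : 0 < x ^ μ := Real.rpow_pos_of_pos hx μ
  have hsup_P : ∀ t ∈ Icc x (2*x), |(fun t : ℝ => t ^ μ) t| ≤ x ^ μ + (2*x) ^ μ := by
    intro t ht
    rw [abs_of_pos (Real.rpow_pos_of_pos (lt_of_lt_of_le hx ht.1) μ)]
    exact my_rpow_le_of_mem hx ht.1 ht.2
  have hMP0 : (0:ℝ) ≤ x ^ μ + (2*x) ^ μ :=
    add_nonneg (Real.rpow_nonneg hx.le _) (Real.rpow_nonneg (by linarith) _)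
  have hMf0 : (0:ℝ) ≤ |f x| + V := add_nonneg (abs_nonneg _) hV0
  have key := my_eVariationOn_mul_le (fun t : ℝ => t ^ μ) f (Icc x (2*x)) _ _ hMP0 hMf0
    hsup_P hsup_f
  refine le_trans key ?_
  have h2 : eVariationOn (fun t : ℝ => t ^ μ) (Icc x (2*x)) ≤
      ENNReal.ofReal (x ^ μ + (2*x) ^ μ) := my_eVar_rpow_le hx (by linarith)
  have hfinal : (x ^ μ + (2*x) ^ μ) * (C * I) + (|f x| + V) * (x ^ μ + (2*x) ^ μ) ≤
      max (K / m0) 2 * J := by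
    have hx2 : (2*x) ^ μ = 2 ^ μ * x ^ μ := Real.mul_rpow (by norm_num) hx.le
    have e1 : (x ^ μ + (2*x) ^ μ) * (C * I) + (|f x| + V) * (x ^ μ + (2*x) ^ μ)
        = (1 + 2 ^ μ) * x ^ μ * (C * I + (|f x| + V)) := by rw [hx2]; ring
    have e2 : C * I + (|f x| + V) ≤ (3 * C + 1 / Real.log 2) * I := by
      have e3 : (3 * C + 1 / Real.log 2) * I = 3 * (C * I) + I / Real.log 2 := by ring
      linarith
    calc (x ^ μ + (2*x) ^ μ) * (C * I) + (|f x| + V) * (x ^ μ + (2*x) ^ μ)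
        = (1 + 2 ^ μ) * x ^ μ * (C * I + (|f x| + V)) := e1
      _ ≤ (1 + 2 ^ μ) * x ^ μ * ((3 * C + 1 / Real.log 2) * I) :=
          mul_le_mul_of_nonneg_left e2 (mul_nonneg (by linarith) hxμ.le)
      _ = (K / m0) * (m0 * x ^ μ * I) := by
          rw [hKdef]; field_simp
      _ ≤ (K / m0) * J := mul_le_mul_of_nonneg_left hcJ (div_nonneg hK.le hm0.le)
      _ ≤ max (K / m0) 2 * J := mul_le_mul_of_nonneg_right (le_max_left _ _) hJ0
  calc ENNReal.ofReal (x ^ μ + (2*x) ^ μ) * eVariationOn f (Icc x (2*x))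
      + ENNReal.ofReal (|f x| + V) * eVariationOn (fun t : ℝ => t ^ μ) (Icc x (2*x))
      ≤ ENNReal.ofReal (x ^ μ + (2*x) ^ μ) * ENNReal.ofReal (C * I)
        + ENNReal.ofReal (|f x| + V) * ENNReal.ofReal (x ^ μ + (2*x) ^ μ) :=
        add_le_add (mul_le_mul_right hGM _) (mul_le_mul_right h2 _)
    _ = ENNReal.ofReal ((x ^ μ + (2*x) ^ μ) * (C * I) + (|f x| + V) * (x ^ μ + (2*x) ^ μ)) := by
        rw [← ENNReal.ofReal_mul hMP0, ← ENNReal.ofReal_mul hMf0,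
          ← ENNReal.ofReal_add (mul_nonneg hMP0 (mul_nonneg (by linarith) hI0))
            (mul_nonneg hMf0 hMP0)]
    _ ≤ ENNReal.ofReal (max (K / m0) 2 * J) := ENNReal.ofReal_le_ofReal hfinal
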